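/- Let R be a (q,s) chain ring and let n ≤ m. Then the number of full-row-rank matrices in R^{n×m} (matrices of rank n) equals q^{snm} · ∏_{i=0}^{n−1}(1 − q^{i−m}). -/

import Mathlib

open scoped BigOperators

section ChainRingDefs

variable {R : Type*} [CommRing R]

/-- For a shape `μ = (μ₁,…,μ_s)` (0-indexed as `μ : Fin s → ℕ`), the exponent of `π`
governing the `j`-th coordinate (0-indexed) of the module `R^μ`: the number of
components of `μ` that are `≤ j`. -/
def shapeExp {s : ℕ} (μ : Fin s → ℕ) (j : ℕ) : ℕ :=
  (Finset.univ.filter fun i : Fin s => μ i ≤ j).card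

/-- The last (largest) component `μ_s` of a shape (for monotone `μ`). -/
def shapeLast {s : ℕ} (μ : Fin s → ℕ) : ℕ := Finset.univ.sup μ

/-- The module `R^μ = ⟨1⟩^{μ₁} × ⟨π⟩^{μ₂−μ₁} × ⋯ × ⟨π^{s−1}⟩^{μ_s−μ_{s−1}}`,
realized as a submodule of `R^{μ_s}`. -/
def shapeModule (R : Type*) [CommRing R] (π : R) {s : ℕ} (μ : Fin s → ℕ) :
    Submodule R (Fin (shapeLast μ) → R) :=
  Submodule.pi Set.univ fun j => Ideal.span {π ^ shapeExp μ (j : ℕ)}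

/-- The module `M` has shape `μ`, i.e. `M ≅ R^μ`. -/
def HasShape (R : Type*) [CommRing R] (π : R) {s : ℕ} (μ : Fin s → ℕ)
    (M : Type*) [AddCommGroup M] [Module R M] : Prop :=
  Nonempty (M ≃ₗ[R] shapeModule R π μ)

/-- The row span of a matrix: the submodule of `R^m` generated by its rows. -/
def rowSpan (R : Type*) [CommRing R] {n m : ℕ} (A : Matrix (Fin n) (Fin m) R) :
    Submodule R (Fin m → R) :=
  Submodule.span R (Set.range fun i => A i)

-- The degree of `a ∈ R`: the unique `l` with `a ∈ ⟨π^l⟩ \ ⟨π^{l+1}⟩` for `a ≠ 0`,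
-- and `s` for `a = 0`.
open Classical in
noncomputable def degR (π : R) (s : ℕ) (a : R) : ℕ :=
  if a = 0 then s else sSup {l : ℕ | a ∈ Ideal.span {π ^ l}}

/-- `j` is the pivot position of the row `r`: the earliest entry among the entries of
least degree in that row. -/
def IsPivotIdx (π : R) (s : ℕ) {m : ℕ} (r : Fin m → R) (j : Fin m) : Prop :=
  (∀ k, degR π s (r j) ≤ degR π s (r k)) ∧ ∀ k, k < j → degR π s (r j) < degR π s (r k)

/-- `V` is a complete set of residues modulo `π` containing `0`. -/
def IsCompleteResidues (π : R) (V : Set R) : Prop :=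
  0 ∈ V ∧ ∀ a : R, ∃! v, v ∈ V ∧ a - v ∈ Ideal.span {π}

/-- The set `R(R,π^l) = {Σ_{i<l} a_i π^i : a_i ∈ V}` of residues modulo `π^l`. -/
def residueSet (π : R) (V : Set R) (l : ℕ) : Set R :=
  {x | ∃ a : Fin l → R, (∀ i, a i ∈ V) ∧ x = ∑ i, a i * π ^ (i : ℕ)}

/-- The matrix `A` is in row canonical form (with respect to the residue set `V`). -/
def IsRCF (π : R) (s : ℕ) (V : Set R) {n m : ℕ} (A : Matrix (Fin n) (Fin m) R) : Prop :=
  -- (1) nonzero rows lie above zero rows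
  (∀ i i' : Fin n, i < i' → A i' ≠ 0 → A i ≠ 0) ∧
  -- (2) pivots of smaller degree lie above pivots of larger degree; among pivots of
  -- equal degree, earlier pivots lie above later ones
  (∀ i i' : Fin n, ∀ j j' : Fin m, i < i' → A i ≠ 0 → A i' ≠ 0 →
      IsPivotIdx π s (A i) j → IsPivotIdx π s (A i') j' →
      degR π s (A i j) ≤ degR π s (A i' j') ∧
        (degR π s (A i j) = degR π s (A i' j') → j ≤ j')) ∧
  -- (3) every pivot equals `π^l` for some `0 ≤ l ≤ s-1`
  (∀ i : Fin n, ∀ j : Fin m, A i ≠ 0 → IsPivotIdx π s (A i) j →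
      degR π s (A i j) < s ∧ A i j = π ^ degR π s (A i j)) ∧
  -- (4) entries below a pivot in its column are zero; entries above lie in `R(R,π^l)`
  (∀ i : Fin n, ∀ j : Fin m, A i ≠ 0 → IsPivotIdx π s (A i) j →
      (∀ i' : Fin n, i < i' → A i' j = 0) ∧
      (∀ i' : Fin n, i' < i → A i' j ∈ residueSet π V (degR π s (A i j))))

/-- For a shape `κ` (0-indexed) and `i : Fin s`, the previous component `κ_{i-1}`
(`0` when `i = 0`); with the paper's 1-indexed convention this is `κ_i` for the
0-indexed position `i` (whose 1-indexed position is `i+1`). -/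
def prevVal {s : ℕ} (κ : Fin s → ℕ) (i : Fin s) : ℕ :=
  if (i : ℕ) = 0 then 0
  else κ ⟨(i : ℕ) - 1, lt_of_le_of_lt (Nat.sub_le _ _) i.isLt⟩

end ChainRingDefs


namespace ChainRingAux
set_option linter.unusedSectionVars false

section Aux

variable {R : Type*} [CommRing R] [IsLocalRing R]
variable (q s : ℕ) (π : R)

-- π^t ≠ 0 for t ≤ s-1
theorem pow_pi_ne_zero (hs : 0 < s) (hnil' : π ^ (s-1) ≠ 0) {t : ℕ} (ht : t < s) : π ^ t ≠ 0 := by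
  intro h
  apply hnil'
  have : π ^ (s-1) = π ^ t * π ^ (s-1-t) := by
    rw [← pow_add]; congr 1; omega
  rw [this, h, zero_mul]

-- unit decomposition
theorem exists_unit_pow (hmax : IsLocalRing.maximalIdeal R = Ideal.span {π})
    (hnil : π ^ s = 0) {x : R} (hx : x ≠ 0) :
    ∃ l < s, ∃ u : R, IsUnit u ∧ x = π ^ l * u := by
  classical
  have hdvd : ∀ l, π ^ l ∣ x → l < s := by
    intro l hl
    by_contra h
    push_neg at h
    have : π ^ l = 0 := by
      have : π ^ l = π ^ s * π ^ (l - s) := by rw [← pow_add]; congr 1; omega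
      rw [this, hnil, zero_mul]
    exact hx (by simpa [this] using hl)
  -- largest l ≤ s-1 with π^l ∣ x
  set L := Nat.findGreatest (fun l => π ^ l ∣ x) s with hL
  have hLdvd : π ^ L ∣ x := by
    have h0 := Nat.findGreatest_spec (P := fun l => π ^ l ∣ x) (m := 0) (n := s)
      (Nat.zero_le s) (by simp)
    simpa [hL] using h0
  obtain ⟨u, hu⟩ := hLdvd
  have hLs : L < s := hdvd L ⟨u, hu⟩
  refine ⟨L, hLs, u, ?_, hu⟩
  by_contra hnu
  have humem : u ∈ IsLocalRing.maximalIdeal R := by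
    rwa [IsLocalRing.mem_maximalIdeal]
  rw [hmax, Ideal.mem_span_singleton] at humem
  obtain ⟨v, hv⟩ := humem
  have : π ^ (L+1) ∣ x := ⟨v, by rw [hu, hv, pow_succ]; ring⟩
  have h1 := hdvd _ this
  have := Nat.findGreatest_is_greatest (Nat.lt_succ_self L) (by omega) -- L+1 ≤ s
  exact this ‹π ^ (L+1) ∣ x›

-- annihilator
theorem ann_pow (hs : 0 < s) (hmax : IsLocalRing.maximalIdeal R = Ideal.span {π})
    (hnil : π ^ s = 0) (hnil' : π ^ (s-1) ≠ 0) {i : ℕ} (hi : i ≤ s) (x : R) :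
    π ^ i * x = 0 ↔ x ∈ Ideal.span {π ^ (s - i)} := by
  constructor
  · intro h
    rcases eq_or_ne x 0 with rfl | hx
    · exact Submodule.zero_mem _
    obtain ⟨l, hl, u, hu, rfl⟩ := exists_unit_pow s π hmax hnil hx
    rw [Ideal.mem_span_singleton]
    have hpil : π ^ (i + l) = 0 := by
      have h2 : π ^ (i + l) * u = 0 := by rw [pow_add]; linear_combination h
      have := hu.unit.isUnit
      calc π ^ (i+l) = π ^ (i+l) * u * (↑hu.unit⁻¹ : Rˣ) := by
              rw [mul_assoc]; simp [IsUnit.unit_spec]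
        _ = 0 := by rw [h2, zero_mul]
    have : s ≤ i + l := by
      by_contra hc
      exact pow_pi_ne_zero s π hs hnil' (by omega) hpil
    exact Dvd.dvd.mul_right ⟨π ^ (l - (s-i)), by rw [← pow_add]; congr 1; omega⟩ u
  · intro h
    rw [Ideal.mem_span_singleton] at h
    obtain ⟨c, rfl⟩ := h
    rw [← mul_assoc, ← pow_add]
    have : i + (s - i) = s := by omega
    rw [this, hnil, zero_mul]
end Aux

section Card
variable {R : Type*} [CommRing R]

theorem card_of_surj {M N : Type*} [AddCommGroup M] [Module R M] [AddCommGroup N] [Module R N]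
    (φ : M →ₗ[R] N) (h : Function.Surjective φ) :
    Nat.card M = Nat.card (LinearMap.ker φ) * Nat.card N := by
  rw [Submodule.card_eq_card_quotient_mul_card (LinearMap.ker φ),
    Nat.card_congr (φ.quotKerEquivOfSurjective h).toEquiv]

variable [Fintype R] [IsLocalRing R] {q s : ℕ} {π : R}
  (hs : 0 < s) (hmax : IsLocalRing.maximalIdeal R = Ideal.span {π})
  (hnil : π ^ s = 0) (hnil' : π ^ (s-1) ≠ 0)
  (hq : Nat.card (IsLocalRing.ResidueField R) = q)

include hs hmax hnil hnil' hq

theorem card_quot_residue : Nat.card (R ⧸ Ideal.span {π}) = q := by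
  rw [← hq]
  exact Nat.card_congr (Quotient.congrRight (by rw [← hmax]; exact fun a b => Iff.rfl))

theorem card_quot_pow_pi : ∀ j ≤ s, Nat.card (R ⧸ Ideal.span {π ^ j}) = q ^ j := by
  intro j
  induction j with
  | zero =>
    intro _
    have : (Ideal.span {π ^ 0} : Ideal R) = ⊤ := by simp [Ideal.span_singleton_one]
    rw [this, pow_zero]
    have : Subsingleton (R ⧸ (⊤ : Ideal R)) := Submodule.Quotient.subsingleton_iff.mpr rfl
    exact Nat.card_eq_one_iff_unique.mpr ⟨⟨fun a b => Subsingleton.elim a b⟩, ⟨0⟩⟩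
  | succ j ih =>
    intro hj1
    have hj : j ≤ s := by omega
    -- the natural surjection α
    have hle : Ideal.span {π ^ (j+1)} ≤ Submodule.comap (LinearMap.id : R →ₗ[R] R) (Ideal.span {π ^ j}) := by
      rw [Submodule.comap_id]
      exact Ideal.span_singleton_le_span_singleton.mpr ⟨π, by rw [pow_succ]⟩
    set α := Submodule.mapQ (Ideal.span {π ^ (j+1)}) (Ideal.span {π ^ j}) LinearMap.id hle with hα
    have hαsurj : Function.Surjective α := by
      intro y
      obtain ⟨x, rfl⟩ := Submodule.mkQ_surjective _ y
      exact ⟨Submodule.Quotient.mk x, rfl⟩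
    -- β : R →ₗ R/(π^{j+1}), x ↦ [x π^j]
    set β := (Ideal.span {π ^ (j+1)}).mkQ.comp (LinearMap.toSpanSingleton R R (π ^ j)) with hβ
    have hrange : LinearMap.range β = LinearMap.ker α := by
      ext y
      constructor
      · rintro ⟨x, rfl⟩
        simp only [LinearMap.mem_ker, hβ, LinearMap.comp_apply, Submodule.mkQ_apply, hα,
          Submodule.mapQ_apply, LinearMap.id_apply]
        rw [Submodule.Quotient.mk_eq_zero]
        exact Ideal.mem_span_singleton.mpr ⟨x, by simp only [LinearMap.toSpanSingleton_apply, smul_eq_mul]; ring⟩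
      · intro hy
        obtain ⟨x, rfl⟩ := Submodule.mkQ_surjective _ y
        simp only [LinearMap.mem_ker, hα, Submodule.mkQ_apply, Submodule.mapQ_apply,
          LinearMap.id_apply, Submodule.Quotient.mk_eq_zero] at hy
        obtain ⟨c, rfl⟩ := Ideal.mem_span_singleton.mp hy
        exact ⟨c, by simp [hβ, LinearMap.toSpanSingleton_apply, mul_comm]⟩
    have hkerβ : LinearMap.ker β = Ideal.span {π} := by
      ext x
      simp only [LinearMap.mem_ker, hβ, LinearMap.comp_apply, Submodule.mkQ_apply,
        LinearMap.toSpanSingleton_apply, Submodule.Quotient.mk_eq_zero]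
      constructor
      · intro hx
        obtain ⟨c, hc⟩ := Ideal.mem_span_singleton.mp hx
        have h0 : π ^ j * (x - c * π) = 0 := by
          rw [smul_eq_mul] at hc
          have : x * π ^ j = c * π ^ (j+1) := by rw [hc]; ring
          rw [mul_sub]
          have : π ^ j * x = π ^ j * (c * π) := by rw [mul_comm (π ^ j) x, this, pow_succ]; ring
          rw [this, sub_self]
        have hmem := (ann_pow s π hs hmax hnil hnil' hj (x - c*π)).mp h0
        have hsub : Ideal.span {π ^ (s-j)} ≤ Ideal.span {π} := by
          apply Ideal.span_singleton_le_span_singleton.mpr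
          exact ⟨π ^ (s-j-1), by rw [← pow_succ']; congr 1; omega⟩
        have := hsub hmem
        obtain ⟨d, hd⟩ := Ideal.mem_span_singleton.mp this
        exact Ideal.mem_span_singleton.mpr ⟨d + c, by rw [mul_add]; rw [← hd]; ring⟩
      · intro hx
        obtain ⟨c, rfl⟩ := Ideal.mem_span_singleton.mp hx
        apply Ideal.mem_span_singleton.mpr
        exact ⟨c, by simp only [smul_eq_mul]; rw [pow_succ]; ring⟩
    -- counting
    have h1 : Nat.card R = Nat.card (Ideal.span {π} : Ideal R) * q := by
      have := card_of_surj (Ideal.span {π} : Ideal R).mkQ (Submodule.mkQ_surjective _)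
      rwa [Submodule.ker_mkQ, card_quot_residue hs hmax hnil hnil' hq] at this
    have h2 : Nat.card R = Nat.card (Ideal.span {π} : Ideal R) * Nat.card (LinearMap.ker α) := by
      have := card_of_surj β.rangeRestrict (LinearMap.surjective_rangeRestrict β)
      rwa [LinearMap.ker_rangeRestrict, hkerβ, hrange] at this
    have hpos : 0 < Nat.card (Ideal.span {π} : Ideal R) := Nat.card_pos
    have hkerα : Nat.card (LinearMap.ker α) = q := by
      have := h1.symm.trans h2
      exact (Nat.eq_of_mul_eq_mul_left hpos this).symm
    have h3 := card_of_surj α hαsurj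
    rw [hkerα, ih hj] at h3
    rw [h3, pow_succ]
    ring

theorem card_R : Nat.card R = q ^ s := by
  have := card_quot_pow_pi hs hmax hnil hnil' hq s le_rfl
  rw [hnil] at this
  rw [← this]
  refine Nat.card_congr (Equiv.symm ?_)
  have : (Ideal.span {(0:R)} : Ideal R) = ⊥ := by simp
  rw [this]
  exact (Submodule.quotEquivOfEqBot ⊥ rfl).toEquiv

theorem card_max_ideal : Nat.card (Ideal.span {π} : Ideal R) = q ^ (s-1) := by
  have h1 : Nat.card R = Nat.card (Ideal.span {π} : Ideal R) * q := by
    have := card_of_surj (Ideal.span {π} : Ideal R).mkQ (Submodule.mkQ_surjective _)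
    rwa [Submodule.ker_mkQ, card_quot_residue hs hmax hnil hnil' hq] at this
  have h2 := card_R hs hmax hnil hnil' hq (R := R)
  have hqpos : 0 < q := by
    have : Finite (IsLocalRing.ResidueField R) := Quotient.finite _
    rw [← hq]; exact Nat.card_pos
  have : q ^ s = q ^ (s-1) * q := by rw [← pow_succ]; congr 1; omega
  rw [h2, this] at h1
  exact (Nat.eq_of_mul_eq_mul_right hqpos h1.symm)

end Card

section StepAB
variable {R : Type*} [CommRing R] [Fintype R] {q s : ℕ} {π : R}

theorem shapeLast_const (hs : 0 < s) (n : ℕ) : shapeLast (fun _ : Fin s => n) = n := by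
  unfold shapeLast
  have : Nonempty (Fin s) := Fin.pos_iff_nonempty.mp hs
  exact Finset.sup_const Finset.univ_nonempty n

theorem shapeModule_const (hs : 0 < s) (n : ℕ) :
    shapeModule R π (fun _ : Fin s => n) = ⊤ := by
  rw [eq_top_iff]
  intro x _
  rw [shapeModule, Submodule.mem_pi]
  intro j _
  have hj : (j : ℕ) < n := j.isLt.trans_eq (shapeLast_const hs n)
  have : shapeExp (fun _ : Fin s => n) (j : ℕ) = 0 := by
    unfold shapeExp
    rw [Finset.card_eq_zero, Finset.filter_eq_empty_iff]
    intro i _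
    show ¬ n ≤ (j : ℕ)
    omega
  rw [this, pow_zero, Ideal.span_singleton_one]
  trivial

theorem hasShape_const_iff (hs : 0 < s) {n m : ℕ} (A : Matrix (Fin n) (Fin m) R) :
    HasShape R π (fun _ : Fin s => n) ↥(rowSpan R A) ↔
      Function.Injective A.vecMulLinear := by
  have hrange : LinearMap.range A.vecMulLinear = rowSpan R A := by
    rw [range_vecMulLinear]; rfl
  have e2 : (shapeModule R π (fun _ : Fin s => n)) ≃ₗ[R] (Fin n → R) := by
    have e2a : (shapeModule R π fun _ : Fin s => n) ≃ₗ[R] (Fin (shapeLast fun _ : Fin s => n) → R) :=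
      LinearEquiv.ofTop _ (shapeModule_const hs n)
    have e2b : (Fin (shapeLast fun _ : Fin s => n) → R) ≃ₗ[R] (Fin n → R) :=
      LinearEquiv.funCongrLeft R R (finCongr (shapeLast_const hs n)).symm
    exact e2a.trans e2b
  constructor
  · rintro ⟨e⟩
    -- surjective self-map of R^n
    let g : (Fin n → R) →ₗ[R] ↥(rowSpan R A) :=
      A.vecMulLinear.codRestrict (rowSpan R A) (fun x => hrange ▸ LinearMap.mem_range_self _ x)
    have hgsurj : Function.Surjective g := by
      rintro ⟨y, hy⟩
      rw [← hrange] at hy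
      obtain ⟨x, hx⟩ := hy
      exact ⟨x, Subtype.ext hx⟩
    have hcomp : Function.Surjective ((e2.toLinearMap.comp (e.toLinearMap.comp g)) :
        (Fin n → R) →ₗ[R] (Fin n → R)) := by
      simp only [LinearMap.coe_comp, LinearEquiv.coe_coe]
      exact e2.surjective.comp (e.surjective.comp hgsurj)
    have hinj := Finite.injective_iff_surjective.mpr hcomp
    intro x y hxy
    apply hinj
    simp only [LinearMap.coe_comp, LinearEquiv.coe_coe, Function.comp_apply]
    congr 1
    congr 1
    exact Subtype.ext hxy
  · intro hinj
    exact ⟨(LinearEquiv.ofEq _ _ hrange.symm).trans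
      ((LinearEquiv.ofInjective A.vecMulLinear hinj).symm.trans e2.symm)⟩
end StepAB

section StepC
variable {R : Type*} [CommRing R] [Fintype R] [IsLocalRing R] {q s : ℕ} {π : R}

open IsLocalRing
open scoped Matrix

theorem res_eq_zero_iff (hmax : maximalIdeal R = Ideal.span {π}) (x : R) :
    residue R x = 0 ↔ x ∈ Ideal.span {π} := by
  rw [← hmax]
  exact Ideal.Quotient.eq_zero_iff_mem

theorem isUnit_of_res_ne (hmax : maximalIdeal R = Ideal.span {π}) {x : R}
    (hx : residue R x ≠ 0) : IsUnit x := by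
  by_contra h
  exact hx ((res_eq_zero_iff hmax x).mpr (hmax ▸ (mem_maximalIdeal x).mpr h))

theorem inj_iff_res (hs : 0 < s) (hmax : maximalIdeal R = Ideal.span {π})
    (hnil : π ^ s = 0) (hnil' : π ^ (s-1) ≠ 0) {n m : ℕ} (A : Matrix (Fin n) (Fin m) R) :
    Function.Injective A.vecMulLinear ↔
      Function.Injective (A.map (residue R)).vecMulLinear := by
  set k := ResidueField R
  set Abar := A.map (residue R) with hAbar
  constructor
  · -- R-injective → k-injective; contrapositive
    intro hinj
    rw [← LinearMap.ker_eq_bot] at hinj ⊢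
    rw [Submodule.eq_bot_iff] at hinj ⊢
    intro g hg
    by_contra hgne
    obtain ⟨i₀, hi₀⟩ : ∃ i, g i ≠ 0 := by
      by_contra h; push_neg at h; exact hgne (funext h)
    -- lift g
    let c : Fin n → R := fun i => Function.surjInv (residue_surjective (R := R)) (g i)
    have hc : ∀ i, residue R (c i) = g i := fun i =>
      Function.surjInv_eq (residue_surjective (R := R)) (g i)
    have hcA : ∀ j, (c ᵥ* A) j ∈ Ideal.span {π} := by
      intro j
      rw [← res_eq_zero_iff hmax]
      have hmem : residue R ((c ᵥ* A) j) = (g ᵥ* Abar) j := by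
        simp only [Matrix.vecMul, dotProduct, map_sum, map_mul, hc, hAbar, Matrix.map_apply]
      rw [hmem]
      have : (Abar.vecMulLinear g) = 0 := hg
      rw [Matrix.vecMulLinear_apply] at this
      rw [this]; rfl
    let x : Fin n → R := fun i => π ^ (s-1) * c i
    have hxA : A.vecMulLinear x = 0 := by
      rw [Matrix.vecMulLinear_apply]
      funext j
      have : (x ᵥ* A) j = π ^ (s-1) * (c ᵥ* A) j := by
        simp only [Matrix.vecMul, dotProduct, Finset.mul_sum, x]
        exact Finset.sum_congr rfl fun i _ => by ring
      obtain ⟨d, hd⟩ := Ideal.mem_span_singleton.mp (hcA j)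
      rw [this, hd]
      show π ^ (s-1) * (π * d) = (0 : R)
      calc π ^ (s-1) * (π * d) = π ^ (s-1+1) * d := by rw [pow_succ]; ring
        _ = 0 := by rw [show s-1+1 = s by omega, hnil, zero_mul]
    have hx0 := hinj x hxA
    have hxi : x i₀ = 0 := congr_fun hx0 i₀
    have hcu : IsUnit (c i₀) := isUnit_of_res_ne hmax (by rw [hc]; exact hi₀)
    apply pow_pi_ne_zero s π hs hnil' (show s - 1 < s by omega)
    calc π ^ (s-1) = π ^ (s-1) * c i₀ * ↑hcu.unit⁻¹ := by
          rw [mul_assoc]; simp [IsUnit.unit_spec]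
      _ = 0 := by rw [show π ^ (s-1) * c i₀ = 0 from hxi, zero_mul]
  · -- k-injective → R-injective
    intro hinj
    -- right inverse over k
    have hker : LinearMap.ker Abar.vecMulLinear = ⊥ := LinearMap.ker_eq_bot.mpr hinj
    obtain ⟨gl, hgl⟩ := LinearMap.exists_leftInverse_of_injective Abar.vecMulLinear hker
    -- gl : (Fin m → k) →ₗ (Fin n → k), gl ∘ f = id
    set Bbar := LinearMap.toMatrixRight' gl with hBbar
    have hglB : ∀ y, gl y = y ᵥ* Bbar := by
      intro y
      have : (LinearMap.toMatrixRight'.symm (Bbar)) y = y ᵥ* Bbar := rfl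
      rw [← this, hBbar, LinearEquiv.symm_apply_apply]
    have hvAB : ∀ v : Fin n → ResidueField R, v ᵥ* (Abar * Bbar) = v := by
      intro v
      have h := LinearMap.congr_fun hgl v
      simp only [LinearMap.comp_apply, Matrix.vecMulLinear_apply, LinearMap.id_apply] at h
      rw [hglB] at h
      rwa [Matrix.vecMul_vecMul] at h
    have hABbar : Abar * Bbar = 1 := by
      ext i j
      have h2 := hvAB (Pi.single i 1)
      rw [Matrix.single_one_vecMul] at h2
      rw [show (Abar * Bbar) i j = (Abar * Bbar).row i j from rfl, congr_fun h2 j]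
      simp [Matrix.one_apply, Pi.single_apply, eq_comm]
    -- lift Bbar
    let B : Matrix (Fin m) (Fin n) R :=
      Matrix.of fun i j => Function.surjInv (residue_surjective (R := R)) (Bbar i j)
    have hB : B.map (residue R) = Bbar := by
      ext i j
      exact Function.surjInv_eq (residue_surjective (R := R)) (Bbar i j)
    have hresdet : residue R ((A * B).det) = 1 := by
      rw [RingHom.map_det]
      have : (residue R).mapMatrix (A * B) = Abar * Bbar := by
        show (A * B).map (residue R) = Abar * Bbar
        rw [Matrix.map_mul, hB, hAbar]
      rw [this, hABbar, Matrix.det_one]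
    have hdet : IsUnit (A * B).det :=
      isUnit_of_res_ne hmax (by rw [hresdet]; exact one_ne_zero)
    intro x y hxy
    simp only [Matrix.vecMulLinear_apply] at hxy
    have h1 : x ᵥ* ((A * B) * (A * B)⁻¹) = y ᵥ* ((A * B) * (A * B)⁻¹) := by
      rw [← Matrix.vecMul_vecMul, ← Matrix.vecMul_vecMul, ← Matrix.vecMul_vecMul,
        ← Matrix.vecMul_vecMul, hxy]
    rwa [Matrix.mul_nonsing_inv _ hdet, Matrix.vecMul_one, Matrix.vecMul_one] at h1
end StepC

section StepD
variable {R : Type*} [CommRing R] [Fintype R] [IsLocalRing R] {q s : ℕ} {π : R}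
open IsLocalRing

noncomputable def sigmaRes (R : Type*) [CommRing R] [IsLocalRing R] : ResidueField R → R :=
  Function.surjInv (residue_surjective (R := R))

theorem sigmaRes_spec (a : ResidueField R) : residue R (sigmaRes R a) = a :=
  Function.surjInv_eq _ a

theorem card_pred_res (hmax : maximalIdeal R = Ideal.span {π}) {n m : ℕ}
    (P : Matrix (Fin n) (Fin m) (ResidueField R) → Prop) :
    Nat.card {A : Matrix (Fin n) (Fin m) R | P (A.map (residue R))} =
      Nat.card {B : Matrix (Fin n) (Fin m) (ResidueField R) // P B} *
        Nat.card (Ideal.span {π} : Ideal R) ^ (n * m) := by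
  have key : ∀ a : R, a - sigmaRes R (residue R a) ∈ Ideal.span {π} := by
    intro a
    rw [← res_eq_zero_iff hmax, map_sub, sigmaRes_spec, sub_self]
  have memspan : ∀ (c : ↥(Ideal.span {π} : Ideal R)), residue R (c : R) = 0 := by
    intro c
    rw [res_eq_zero_iff hmax]
    exact c.2
  let e : {A : Matrix (Fin n) (Fin m) R | P (A.map (residue R))} ≃
      {B : Matrix (Fin n) (Fin m) (ResidueField R) // P B} ×
        (Fin n → Fin m → ↥(Ideal.span {π} : Ideal R)) :=
  { toFun := fun A => ⟨⟨A.1.map (residue R), A.2⟩,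
      fun i j => ⟨A.1 i j - sigmaRes R (residue R (A.1 i j)), key _⟩⟩
    invFun := fun BC => ⟨Matrix.of fun i j => sigmaRes R (BC.1.1 i j) + (BC.2 i j : R), by
      have hmap : (Matrix.of fun i j => sigmaRes R (BC.1.1 i j) + (BC.2 i j : R)).map (residue R)
          = BC.1.1 := by
        ext i j
        simp only [Matrix.map_apply, Matrix.of_apply, map_add, sigmaRes_spec, memspan, add_zero]
      show P _
      rw [hmap]
      exact BC.1.2⟩
    left_inv := fun A => by
      apply Subtype.ext
      ext i j
      simp only [Matrix.of_apply, Matrix.map_apply]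
      ring
    right_inv := fun BC => by
      have hres : ∀ i j, residue R (sigmaRes R (BC.1.1 i j) + (BC.2 i j : R)) = BC.1.1 i j := by
        intro i j
        rw [map_add, sigmaRes_spec, memspan, add_zero]
      refine Prod.ext ?_ ?_
      · apply Subtype.ext
        ext i j
        simp only [Matrix.map_apply, Matrix.of_apply, hres]
      · funext i j
        apply Subtype.ext
        simp only [Matrix.of_apply, Matrix.map_apply, hres]
        ring }
  rw [Nat.card_congr e, Nat.card_prod]
  congr 1
  rw [Nat.card_pi]
  have : ∀ i : Fin n, Nat.card (Fin m → ↥(Ideal.span {π} : Ideal R)) =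
      Nat.card ↥(Ideal.span {π} : Ideal R) ^ m := by
    intro i
    rw [Nat.card_pi, Finset.prod_const, Finset.card_univ, Fintype.card_fin]
  rw [Finset.prod_congr rfl (fun i _ => this i), Finset.prod_const, Finset.card_univ,
    Fintype.card_fin, ← pow_mul, mul_comm m n]
end StepD

section StepE

theorem card_li {K : Type*} [Field K] [Finite K] {q n m : ℕ} (hq : Nat.card K = q)
    (hnm : n ≤ m) :
    Nat.card {B : Matrix (Fin n) (Fin m) K // LinearIndependent K (fun i => B i)} =
      ∏ i ∈ Finset.range n, (q ^ m - q ^ i) := by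
  have : Fintype K := Fintype.ofFinite K
  have hfr : Module.finrank K (Fin m → K) = m := Module.finrank_fin_fun K
  have h1 := card_linearIndependent (K := K) (V := Fin m → K) (k := n) (by rw [hfr]; exact hnm)
  have hcard : Fintype.card K = q := by rw [← Nat.card_eq_fintype_card, hq]
  rw [hfr, hcard] at h1
  have h2 : Nat.card {B : Matrix (Fin n) (Fin m) K // LinearIndependent K (fun i => B i)} =
      Nat.card {s : Fin n → (Fin m → K) // LinearIndependent K s} := by
    refine Nat.card_congr (Equiv.subtypeEquiv (Equiv.refl _) fun B => Iff.rfl)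
  rw [h2, h1]
  rw [Finset.prod_range fun i => (q ^ m - q ^ i)]

theorem final_arith {q s n m : ℕ} (hq : 1 ≤ q) (hs : 0 < s) (hnm : n ≤ m) :
    (((∏ i ∈ Finset.range n, (q ^ m - q ^ i)) * (q ^ (s-1)) ^ (n * m) : ℕ) : ℝ) =
      (q : ℝ) ^ (s * n * m) * ∏ i ∈ Finset.range n, (1 - (q : ℝ) ^ ((i : ℤ) - (m : ℤ))) := by
  have hq0 : (0 : ℝ) < q := by exact_mod_cast hq
  have hcast : (((∏ i ∈ Finset.range n, (q ^ m - q ^ i)) : ℕ) : ℝ) =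
      ∏ i ∈ Finset.range n, ((q : ℝ) ^ m - (q : ℝ) ^ i) := by
    rw [Nat.cast_prod]
    refine Finset.prod_congr rfl fun i hi => ?_
    have hile : q ^ i ≤ q ^ m :=
      Nat.pow_le_pow_right hq (le_trans (le_of_lt (Finset.mem_range.mp hi)) hnm)
    push_cast [Nat.cast_sub hile]
    ring
  have hfac : ∀ i ∈ Finset.range n,
      ((q : ℝ) ^ m - (q : ℝ) ^ i) = (q : ℝ) ^ m * (1 - (q : ℝ) ^ ((i : ℤ) - (m : ℤ))) := by
    intro i _
    have : (q : ℝ) ^ m * (q : ℝ) ^ ((i : ℤ) - (m : ℤ)) = (q : ℝ) ^ i := by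
      rw [← zpow_natCast (q : ℝ) m, ← zpow_add₀ (ne_of_gt hq0), ← zpow_natCast (q : ℝ) i]
      congr 1
      omega
    rw [mul_sub, mul_one, this]
  rw [Nat.cast_mul, hcast, Finset.prod_congr rfl hfac, Finset.prod_mul_distrib,
    Finset.prod_const, Finset.card_range]
  have hpow : (((q ^ (s-1)) ^ (n*m) : ℕ) : ℝ) = (q : ℝ) ^ ((s-1) * (n*m)) := by
    push_cast
    rw [← pow_mul]
  rw [hpow, ← pow_mul]
  rw [mul_assoc, mul_comm (∏ x ∈ Finset.range n, (1 - (q:ℝ) ^ ((x:ℤ) - (m:ℤ))))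
    ((q:ℝ) ^ ((s-1)*(n*m))), ← mul_assoc, ← pow_add]
  rw [show m * n + (s-1) * (n*m) = s * n * m by
    cases s with
    | zero => omega
    | succ t => simp [Nat.succ_sub_one]; ring]
end StepE

end ChainRingAux

/-- The number of full-row-rank `n × m` matrices over a `(q,s)` chain ring, for
`n ≤ m`, equals `q^(snm) · ∏_(i=0)^(n-1) (1 - q^(i-m))`. -/
theorem card_full_row_rank {R : Type*} [CommRing R] [Fintype R] [IsLocalRing R] [IsPrincipalIdealRing R]
    (q s : ℕ) (hs : 0 < s) (π : R)
    (hmax : IsLocalRing.maximalIdeal R = Ideal.span {π})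
    (hnil : π ^ s = 0) (hnil' : π ^ (s - 1) ≠ 0)
    (hq : Nat.card (IsLocalRing.ResidueField R) = q)
    {n m : ℕ} (hnm : n ≤ m) :
    (Nat.card {A : Matrix (Fin n) (Fin m) R |
        HasShape R π (fun _ : Fin s => n) ↥(rowSpan R A)} : ℝ) =
      (q : ℝ) ^ (s * n * m) *
        ∏ i ∈ Finset.range n, (1 - (q : ℝ) ^ ((i : ℤ) - (m : ℤ))) := by
  classical
  have hfin : Finite (IsLocalRing.ResidueField R) := Quotient.finite _
  have hq1 : 1 ≤ q := by
    rw [← hq]; exact Nat.one_le_iff_ne_zero.mpr (Nat.card_pos).ne'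
  have hiff : ∀ A : Matrix (Fin n) (Fin m) R,
      HasShape R π (fun _ : Fin s => n) ↥(rowSpan R A) ↔
        LinearIndependent (IsLocalRing.ResidueField R)
          (fun i => (A.map (IsLocalRing.residue R)) i) := by
    intro A
    rw [ChainRingAux.hasShape_const_iff hs A, ChainRingAux.inj_iff_res hs hmax hnil hnil' A]
    constructor
    · intro h
      exact Matrix.vecMul_injective_iff.mp (by rwa [← Matrix.coe_vecMulLinear])
    · intro h
      have := Matrix.vecMul_injective_iff.mpr h
      rwa [← Matrix.coe_vecMulLinear] at this
  have hsetcard : Nat.card {A : Matrix (Fin n) (Fin m) R |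
      HasShape R π (fun _ : Fin s => n) ↥(rowSpan R A)} =
      Nat.card {A : Matrix (Fin n) (Fin m) R |
        (fun B => LinearIndependent (IsLocalRing.ResidueField R) (fun i => B i))
          (A.map (IsLocalRing.residue R))} :=
    Nat.card_congr (Equiv.setCongr (Set.ext fun A => hiff A))
  rw [hsetcard,
    ChainRingAux.card_pred_res hmax
      (fun B => LinearIndependent (IsLocalRing.ResidueField R) (fun i => B i)),
    ChainRingAux.card_max_ideal hs hmax hnil hnil' hq,
    ChainRingAux.card_li (K := IsLocalRing.ResidueField R) hq hnm]
  exact_mod_cast ChainRingAux.final_arith hq1 hs hnm
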